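/- For every constant c > 0 there exists a constant C > 0 (depending only on c) such that the following holds. Let n ≥ 2 be even, let v_1, …, v_n ∈ ℝ^d, and let r > 0 be such that for every S ⊆ [n] with |S| ≤ n/2, the number of indices x ∈ [n] with min_{s∈S} ‖v_x − v_s‖ ≤ √r is at least (1+c)·|S|. Then for every bisection (S, S̄) of [n] (|S| = n/2) there exists a perfect matching M of [n], each edge of which has one endpoint in S and one in S̄, with Σ_{{x,y}∈M} ‖v_x − v_y‖² ≤ C·n·r. -/

import Mathlib

open Finset

/-- Euclidean distance on `ℝ^d`. -/
noncomputable def vdist {d : ℕ} (u v : Fin d → ℝ) : ℝ := Real.sqrt (∑ i, (u i - v i) ^ 2)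

section GreedyAux

lemma vdist_eq_dist {d : ℕ} (u v : Fin d → ℝ) :
    vdist u v = dist ((WithLp.equiv 2 (Fin d → ℝ)).symm u) ((WithLp.equiv 2 (Fin d → ℝ)).symm v) := by
  rw [EuclideanSpace.dist_eq]
  simp [vdist, Real.dist_eq, sq_abs]

lemma vdist_nonneg {d : ℕ} (u v : Fin d → ℝ) : 0 ≤ vdist u v := Real.sqrt_nonneg _

lemma vdist_comm {d : ℕ} (u v : Fin d → ℝ) : vdist u v = vdist v u := by
  rw [vdist_eq_dist, vdist_eq_dist, dist_comm]

lemma vdist_triangle {d : ℕ} (u v w : Fin d → ℝ) : vdist u w ≤ vdist u v + vdist v w := by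
  rw [vdist_eq_dist, vdist_eq_dist, vdist_eq_dist]
  exact dist_triangle _ _ _

lemma vdist_self {d : ℕ} (u : Fin d → ℝ) : vdist u u = 0 := by
  simp [vdist]

lemma vdist_sq {d : ℕ} (u v : Fin d → ℝ) : vdist u v ^ 2 = ∑ i, (u i - v i) ^ 2 :=
  Real.sq_sqrt (by positivity)

open scoped Classical in
/-- least `j` with `(1+c)^j * k > K` -/
noncomputable def steps (c : ℝ) (K k : ℕ) : ℕ :=
  if h : ∃ j : ℕ, (K : ℝ) < (1 + c) ^ j * k then Nat.find h else 0

lemma steps_exists {c : ℝ} (hc : 0 < c) {k : ℕ} (hk : 1 ≤ k) (K : ℕ) :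
    ∃ j : ℕ, (K : ℝ) < (1 + c) ^ j * k := by
  obtain ⟨j, hj⟩ := pow_unbounded_of_one_lt (K : ℝ) (by linarith : (1:ℝ) < 1 + c)
  exact ⟨j, lt_of_lt_of_le hj (le_mul_of_one_le_right (by positivity) (by exact_mod_cast hk))⟩

lemma steps_spec {c : ℝ} (hc : 0 < c) {k : ℕ} (hk : 1 ≤ k) (K : ℕ) :
    (K : ℝ) < (1 + c) ^ (steps c K k) * k := by
  classical
  rw [steps, dif_pos (steps_exists hc hk K)]
  exact Nat.find_spec (steps_exists hc hk K)

lemma steps_pos {c : ℝ} (hc : 0 < c) {k K : ℕ} (hk : 1 ≤ k) (hkK : k ≤ K) :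
    1 ≤ steps c K k := by
  by_contra h
  have h0 : steps c K k = 0 := by omega
  have hs := steps_spec hc hk K
  rw [h0, pow_zero, one_mul] at hs
  have : (k:ℝ) ≤ (K:ℝ) := by exact_mod_cast hkK
  linarith

lemma steps_pred {c : ℝ} (hc : 0 < c) {k K : ℕ} (hk : 1 ≤ k) (hkK : k ≤ K) :
    (1 + c) ^ (steps c K k - 1) * k ≤ (K : ℝ) := by
  classical
  have h1 := steps_pos hc hk hkK
  have hlt : steps c K k - 1 < steps c K k := by omega
  rw [steps, dif_pos (steps_exists hc hk K)] at hlt ⊢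
  exact not_lt.mp (Nat.find_min (steps_exists hc hk K) hlt)


lemma log_sq_le {t : ℝ} (ht : 1 ≤ t) : Real.log t ^ 2 ≤ 16 * Real.sqrt t := by
  have ht0 : (0:ℝ) < t := by linarith
  have h4 : (0:ℝ) < t ^ ((1:ℝ)/4) := Real.rpow_pos_of_pos ht0 _
  have hlog : Real.log t = 4 * Real.log (t ^ ((1:ℝ)/4)) := by
    rw [Real.log_rpow ht0]; ring
  have h1 : Real.log (t ^ ((1:ℝ)/4)) ≤ t ^ ((1:ℝ)/4) - 1 := Real.log_le_sub_one_of_pos h4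
  have hlt : Real.log t ≤ 4 * t ^ ((1:ℝ)/4) := by rw [hlog]; linarith
  have hlnn : 0 ≤ Real.log t := Real.log_nonneg ht
  have hsq : Real.log t ^ 2 ≤ (4 * t ^ ((1:ℝ)/4)) ^ 2 := by
    apply pow_le_pow_left₀ hlnn hlt
  have hrw : (t ^ ((1:ℝ)/4)) ^ 2 = Real.sqrt t := by
    rw [← Real.rpow_natCast (t ^ ((1:ℝ)/4)) 2, ← Real.rpow_mul ht0.le, Real.sqrt_eq_rpow]
    norm_num
  calc Real.log t ^ 2 ≤ (4 * t ^ ((1:ℝ)/4)) ^ 2 := hsq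
    _ = 16 * ((t ^ ((1:ℝ)/4)) ^ 2) := by ring
    _ = 16 * Real.sqrt t := by rw [hrw]

lemma sum_inv_sqrt (K : ℕ) : ∑ i ∈ Finset.Icc 1 K, (1 / Real.sqrt i) ≤ 2 * Real.sqrt K := by
  induction K with
  | zero => simp
  | succ K ih =>
    rw [Finset.sum_Icc_succ_top (by omega : 1 ≤ K + 1)]
    have h1 : (0:ℝ) < Real.sqrt (K + 1) := Real.sqrt_pos.mpr (by positivity)
    have h2 : (0:ℝ) ≤ Real.sqrt K := Real.sqrt_nonneg _
    have e1 : Real.sqrt (K+1) ^ 2 = (K:ℝ)+1 := Real.sq_sqrt (by positivity)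
    have e2 : Real.sqrt K ^ 2 = (K:ℝ) := Real.sq_sqrt (by positivity)
    have key : 1 / Real.sqrt (K+1) ≤ 2 * Real.sqrt (K+1) - 2 * Real.sqrt K := by
      rw [div_le_iff₀ h1]
      nlinarith [sq_nonneg (Real.sqrt (K+1) - Real.sqrt K)]
    push_cast
    push_cast at ih
    linarith

lemma steps_sq_le {c : ℝ} (hc : 0 < c) {i K : ℕ} (hi : 1 ≤ i) (hiK : i ≤ K) :
    ((steps c K i : ℕ) : ℝ) ^ 2 ≤
      2 + (32 / Real.log (1 + c) ^ 2) * Real.sqrt ((K : ℝ) / i) := by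
  set L := Real.log (1 + c) with hLdef
  have hL : 0 < L := Real.log_pos (by linarith)
  set s := steps c K i with hsdef
  have hs1 : 1 ≤ s := steps_pos hc hi hiK
  have hi0 : (0:ℝ) < (i:ℝ) := by exact_mod_cast hi
  have ht1 : (1:ℝ) ≤ (K:ℝ) / i := (one_le_div hi0).mpr (by exact_mod_cast hiK)
  set a := Real.log ((K:ℝ) / i) with hadef
  have ha0 : 0 ≤ a := Real.log_nonneg ht1
  have hpow : (1 + c) ^ (s - 1) ≤ (K:ℝ) / i := by
    rw [le_div_iff₀ hi0]
    exact steps_pred hc hi hiK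
  have hloga : ((s:ℝ) - 1) * L ≤ a := by
    have : Real.log ((1 + c) ^ (s - 1)) ≤ a := by
      apply Real.log_le_log (by positivity) hpow
    rw [Real.log_pow] at this
    have hcast : ((s - 1 : ℕ) : ℝ) = (s:ℝ) - 1 := by
      push_cast [Nat.cast_sub hs1]; ring
    rw [hcast] at this
    exact this
  have hb : (s:ℝ) - 1 ≤ a / L := (le_div_iff₀ hL).mpr hloga
  have hsq : a ^ 2 ≤ 16 * Real.sqrt ((K:ℝ) / i) := log_sq_le ht1
  have hsr : 0 ≤ Real.sqrt ((K:ℝ) / i) := Real.sqrt_nonneg _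
  have hbnn : 0 ≤ a / L := by positivity
  have hs0 : (1:ℝ) ≤ (s:ℝ) := by exact_mod_cast hs1
  have hbsq : (a / L) ^ 2 ≤ 16 * Real.sqrt ((K:ℝ) / i) / L ^ 2 := by
    rw [div_pow]
    apply div_le_div_of_nonneg_right ?_ (by positivity)
    · exact hsq
  have key : (s:ℝ) ^ 2 ≤ 2 + 2 * (a / L) ^ 2 := by
    nlinarith [sq_nonneg (a / L - 1), mul_self_le_mul_self (by linarith : (0:ℝ) ≤ (s:ℝ) - 1) hb]
  calc (s:ℝ)^2 ≤ 2 + 2 * (a/L)^2 := key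
    _ ≤ 2 + 2 * (16 * Real.sqrt ((K:ℝ)/i) / L^2) := by linarith
    _ = 2 + (32 / L ^ 2) * Real.sqrt ((K:ℝ)/i) := by ring

lemma sum_steps_sq {c : ℝ} (hc : 0 < c) (K : ℕ) :
    ∑ i ∈ Finset.Icc 1 K, ((steps c K i : ℕ) : ℝ) ^ 2 ≤
      (2 + 64 / Real.log (1 + c) ^ 2) * K := by
  set L := Real.log (1 + c) with hLdef
  have hL : 0 < L := Real.log_pos (by linarith)
  have hK0 : (0:ℝ) ≤ (K:ℝ) := by positivity
  have step1 : ∑ i ∈ Finset.Icc 1 K, ((steps c K i : ℕ) : ℝ) ^ 2 ≤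
      ∑ i ∈ Finset.Icc 1 K, (2 + (32 / L ^ 2) * Real.sqrt ((K : ℝ) / i)) := by
    apply Finset.sum_le_sum
    intro i hi
    rw [Finset.mem_Icc] at hi
    exact steps_sq_le hc hi.1 hi.2
  have step2 : ∑ i ∈ Finset.Icc 1 K, Real.sqrt ((K : ℝ) / i) ≤ 2 * K := by
    have : ∀ i ∈ Finset.Icc 1 K, Real.sqrt ((K : ℝ) / i) = Real.sqrt K * (1 / Real.sqrt i) := by
      intro i hi
      rw [Real.sqrt_div hK0, div_eq_mul_one_div]
    rw [Finset.sum_congr rfl this, ← Finset.mul_sum]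
    calc Real.sqrt K * ∑ i ∈ Finset.Icc 1 K, (1 / Real.sqrt i)
        ≤ Real.sqrt K * (2 * Real.sqrt K) :=
          mul_le_mul_of_nonneg_left (sum_inv_sqrt K) (Real.sqrt_nonneg _)
      _ = 2 * (Real.sqrt K ^ 2) := by ring
      _ = 2 * K := by rw [Real.sq_sqrt hK0]
  have hcard : ((Finset.Icc 1 K).card : ℝ) = K := by
    simp [Nat.card_Icc]
  calc ∑ i ∈ Finset.Icc 1 K, ((steps c K i : ℕ) : ℝ) ^ 2
      ≤ ∑ i ∈ Finset.Icc 1 K, (2 + (32 / L ^ 2) * Real.sqrt ((K : ℝ) / i)) := step1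
    _ = 2 * ((Finset.Icc 1 K).card : ℝ) + (32 / L^2) * ∑ i ∈ Finset.Icc 1 K, Real.sqrt ((K:ℝ)/i) := by
        rw [Finset.sum_add_distrib, Finset.sum_const, ← Finset.mul_sum]
        push_cast; ring
    _ ≤ 2 * K + (32 / L^2) * (2 * K) := by
        rw [hcard]
        have : (0:ℝ) ≤ 32 / L^2 := by positivity
        nlinarith [step2]
    _ = (2 + 64 / L ^ 2) * K := by ring

open scoped Classical in
noncomputable def ball {n d : ℕ} (v : Fin n → Fin d → ℝ) (r : ℝ) (A : Finset (Fin n)) :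
    Finset (Fin n) :=
  Finset.univ.filter (fun x => ∃ s ∈ A, vdist (v x) (v s) ≤ Real.sqrt r)

lemma subset_ball {n d : ℕ} (v : Fin n → Fin d → ℝ) {r : ℝ} (hr : 0 ≤ r)
    (A : Finset (Fin n)) : A ⊆ ball v r A := by
  classical
  intro a ha
  simp only [ball, Finset.mem_filter, Finset.mem_univ, true_and]
  exact ⟨a, ha, by rw [vdist_self]; positivity⟩

lemma subset_iter_ball {n d : ℕ} (v : Fin n → Fin d → ℝ) {r : ℝ} (hr : 0 ≤ r)
    (A : Finset (Fin n)) (j : ℕ) : (ball v r)^[j] A ⊆ (ball v r)^[j+1] A := by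
  rw [Function.iterate_succ_apply']
  exact subset_ball v hr _

lemma ncard_ball {n d : ℕ} (v : Fin n → Fin d → ℝ) (r : ℝ) (A : Finset (Fin n)) :
    Nat.card {x : Fin n | ∃ s ∈ A, vdist (v x) (v s) ≤ Real.sqrt r} = (ball v r A).card := by
  classical
  rw [Nat.card_eq_fintype_card]
  rw [ball]
  convert Fintype.card_subtype (fun x => ∃ s ∈ A, vdist (v x) (v s) ≤ Real.sqrt r)
  exact Iff.rfl

lemma growth_iter {n d : ℕ} (v : Fin n → Fin d → ℝ) {r c : ℝ} (hc : 0 < c) (hr : 0 < r)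
    (hyp : ∀ S : Finset (Fin n), S.card ≤ n / 2 →
      (1 + c) * S.card ≤
        (Nat.card {x : Fin n | ∃ s ∈ S, vdist (v x) (v s) ≤ Real.sqrt r} : ℝ))
    (A : Finset (Fin n)) (j : ℕ) :
    n / 2 < ((ball v r)^[j] A).card ∨
      ((1 + c) ^ j * A.card : ℝ) ≤ (((ball v r)^[j] A).card : ℝ) := by
  induction j with
  | zero => right; simp
  | succ j ih =>
    have hsub : (ball v r)^[j] A ⊆ (ball v r)^[j+1] A := subset_iter_ball v hr.le A j
    rcases ih with h | h
    · left; exact lt_of_lt_of_le h (Finset.card_le_card hsub)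
    · by_cases hT : n / 2 < ((ball v r)^[j] A).card
      · left; exact lt_of_lt_of_le hT (Finset.card_le_card hsub)
      · right
        have hT' : ((ball v r)^[j] A).card ≤ n / 2 := not_lt.mp hT
        have hexp := hyp ((ball v r)^[j] A) hT'
        rw [ncard_ball] at hexp
        rw [Function.iterate_succ_apply']
        calc ((1+c)^(j+1) * A.card : ℝ) = (1+c) * ((1+c)^j * A.card) := by ring
          _ ≤ (1+c) * (((ball v r)^[j] A).card : ℝ) := by
              apply mul_le_mul_of_nonneg_left h (by linarith)
          _ ≤ ((ball v r ((ball v r)^[j] A)).card : ℝ) := hexp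

lemma chain_dist {n d : ℕ} (v : Fin n → Fin d → ℝ) {r : ℝ} (hr : 0 < r)
    (A : Finset (Fin n)) (j : ℕ) :
    ∀ x ∈ (ball v r)^[j] A, ∃ a ∈ A, vdist (v x) (v a) ≤ j * Real.sqrt r := by
  induction j with
  | zero =>
    intro x hx
    exact ⟨x, hx, by rw [vdist_self]; simp⟩
  | succ j ih =>
    intro x hx
    rw [Function.iterate_succ_apply'] at hx
    simp only [ball, Finset.mem_filter, Finset.mem_univ, true_and] at hx
    obtain ⟨s, hs, hxs⟩ := hx
    obtain ⟨a, ha, hsa⟩ := ih s hs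
    refine ⟨a, ha, ?_⟩
    calc vdist (v x) (v a) ≤ vdist (v x) (v s) + vdist (v s) (v a) := vdist_triangle _ _ _
      _ ≤ Real.sqrt r + j * Real.sqrt r := add_le_add hxs hsa
      _ = (j + 1 : ℕ) * Real.sqrt r := by push_cast; ring

lemma connect {n d : ℕ} (v : Fin n → Fin d → ℝ) {r c : ℝ} (hc : 0 < c) (hr : 0 < r)
    (hyp : ∀ S : Finset (Fin n), S.card ≤ n / 2 →
      (1 + c) * S.card ≤
        (Nat.card {x : Fin n | ∃ s ∈ S, vdist (v x) (v s) ≤ Real.sqrt r} : ℝ))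
    {A B : Finset (Fin n)} {k : ℕ} (hk : 1 ≤ k)
    (hA : A.card = k) (hB : B.card = k) (hkn : k ≤ n / 2) :
    ∃ a ∈ A, ∃ b ∈ B, vdist (v a) (v b) ≤ 2 * (steps c (n/2) k) * Real.sqrt r := by
  set j := steps c (n/2) k with hj
  have hspec : ((n/2 : ℕ) : ℝ) < (1 + c) ^ j * k := steps_spec hc hk (n/2)
  have hbig : ∀ (X : Finset (Fin n)), X.card = k → n / 2 < ((ball v r)^[j] X).card := by
    intro X hX
    rcases growth_iter v hc hr hyp X j with h | h
    · exact h
    · rw [hX] at h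
      have : ((n/2 : ℕ) : ℝ) < (((ball v r)^[j] X).card : ℝ) := lt_of_lt_of_le hspec h
      exact_mod_cast this
  have hAbig := hbig A hA
  have hBbig := hbig B hB
  -- the two iterated balls intersect
  have hinter : ((ball v r)^[j] A ∩ (ball v r)^[j] B).Nonempty := by
    rw [← Finset.card_pos]
    have h1 : ((ball v r)^[j] A ∪ (ball v r)^[j] B).card ≤ n := by
      calc _ ≤ (Finset.univ : Finset (Fin n)).card := Finset.card_le_card (Finset.subset_univ _)
        _ = n := Finset.card_univ.trans (Fintype.card_fin n)
    have h2 := Finset.card_union_add_card_inter ((ball v r)^[j] A) ((ball v r)^[j] B)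
    omega
  obtain ⟨z, hz⟩ := hinter
  rw [Finset.mem_inter] at hz
  obtain ⟨a, ha, hza⟩ := chain_dist v hr A j z hz.1
  obtain ⟨b, hb, hzb⟩ := chain_dist v hr B j z hz.2
  refine ⟨a, ha, b, hb, ?_⟩
  calc vdist (v a) (v b) ≤ vdist (v a) (v z) + vdist (v z) (v b) := vdist_triangle _ _ _
    _ = vdist (v z) (v a) + vdist (v z) (v b) := by rw [vdist_comm]
    _ ≤ j * Real.sqrt r + j * Real.sqrt r := add_le_add hza hzb
    _ = 2 * j * Real.sqrt r := by ring

lemma match_aux {n d : ℕ} (v : Fin n → Fin d → ℝ) {r c : ℝ} (hc : 0 < c) (hr : 0 < r)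
    (hyp : ∀ S : Finset (Fin n), S.card ≤ n / 2 →
      (1 + c) * S.card ≤
        (Nat.card {x : Fin n | ∃ s ∈ S, vdist (v x) (v s) ≤ Real.sqrt r} : ℝ)) :
    ∀ k : ℕ, ∀ A B : Finset (Fin n), Disjoint A B → A.card = k → B.card = k → 2 * k ≤ n →
      ∃ f : Fin n → Fin n,
        (∀ x ∈ A, f x ∈ B) ∧ (∀ x ∈ B, f x ∈ A) ∧
        (∀ x, x ∉ A → x ∉ B → f x = x) ∧ (∀ x, f (f x) = x) ∧
        (∑ x ∈ A, vdist (v x) (v (f x)) ^ 2) ≤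
          ∑ i ∈ Finset.Icc 1 k, (2 * (steps c (n/2) i) * Real.sqrt r) ^ 2 := by
  intro k
  induction k with
  | zero =>
    intro A B _ hA hB _
    rw [Finset.card_eq_zero] at hA hB
    subst hA; subst hB
    exact ⟨id, by simp⟩
  | succ k ih =>
    intro A B hdisj hA hB hkn
    have hkhalf : k + 1 ≤ n / 2 := by omega
    obtain ⟨a, ha, b, hb, hab⟩ :=
      connect v hc hr hyp (k := k + 1) (by omega) hA hB hkhalf
    have hane : a ≠ b := fun h => (Finset.disjoint_left.mp hdisj ha) (h ▸ hb)
    obtain ⟨f', hf'A, hf'B, hf'id, hf'inv, hf'sum⟩ :=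
      ih (A.erase a) (B.erase b) (hdisj.mono (Finset.erase_subset _ _) (Finset.erase_subset _ _))
        (by rw [Finset.card_erase_of_mem ha, hA]; omega)
        (by rw [Finset.card_erase_of_mem hb, hB]; omega)
        (by omega)
    set f : Fin n → Fin n := fun x => if x = a then b else if x = b then a else f' x with hf
    have hfa : f a = b := by simp [hf]
    have hfb : f b = a := by simp [hf, hane.symm, hane]
    have hfother : ∀ x, x ≠ a → x ≠ b → f x = f' x := by
      intro x hxa hxb; simp [hf, hxa, hxb]
    have hAmem : ∀ x ∈ A, f x ∈ B := by
      intro x hx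
      by_cases hxa : x = a
      · subst hxa; rw [hfa]; exact hb
      · have hxb : x ≠ b := fun h => (Finset.disjoint_left.mp hdisj hx) (h ▸ hb)
        rw [hfother x hxa hxb]
        exact Finset.mem_of_mem_erase (hf'A x (Finset.mem_erase.mpr ⟨hxa, hx⟩))
    have hBmem : ∀ x ∈ B, f x ∈ A := by
      intro x hx
      by_cases hxb : x = b
      · subst hxb; rw [hfb]; exact ha
      · have hxa : x ≠ a := fun h => (Finset.disjoint_right.mp hdisj hx) (h ▸ ha)
        rw [hfother x hxa hxb]
        exact Finset.mem_of_mem_erase (hf'B x (Finset.mem_erase.mpr ⟨hxb, hx⟩))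
    refine ⟨f, hAmem, hBmem, ?_, ?_, ?_⟩
    · intro x hxA hxB
      have hxa : x ≠ a := fun h => hxA (h ▸ ha)
      have hxb : x ≠ b := fun h => hxB (h ▸ hb)
      rw [hfother x hxa hxb]
      exact hf'id x (fun h => hxA (Finset.mem_of_mem_erase h))
        (fun h => hxB (Finset.mem_of_mem_erase h))
    · intro x
      by_cases hxa : x = a
      · subst hxa; rw [hfa, hfb]
      by_cases hxb : x = b
      · subst hxb; rw [hfb, hfa]
      rw [hfother x hxa hxb]
      by_cases hxA : x ∈ A.erase a
      · have h1 : f' x ∈ B.erase b := hf'A x hxA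
        have h2 : f' x ≠ a := fun h =>
          (Finset.disjoint_right.mp hdisj (Finset.mem_of_mem_erase h1)) (h ▸ ha)
        have h3 : f' x ≠ b := (Finset.mem_erase.mp h1).1
        rw [hfother _ h2 h3, hf'inv]
      by_cases hxB : x ∈ B.erase b
      · have h1 : f' x ∈ A.erase a := hf'B x hxB
        have h2 : f' x ≠ a := (Finset.mem_erase.mp h1).1
        have h3 : f' x ≠ b := fun h =>
          (Finset.disjoint_left.mp hdisj (Finset.mem_of_mem_erase h1)) (h ▸ hb)
        rw [hfother _ h2 h3, hf'inv]
      · rw [hf'id x hxA hxB, hfother x hxa hxb, hf'id x hxA hxB]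
    · -- sum bound
      rw [← Finset.add_sum_erase A _ ha, Finset.sum_Icc_succ_top (by omega : 1 ≤ k + 1)]
      have hterm : vdist (v a) (v (f a)) ^ 2 ≤ (2 * (steps c (n/2) (k+1)) * Real.sqrt r) ^ 2 := by
        rw [hfa]
        exact pow_le_pow_left₀ (vdist_nonneg _ _) hab 2
      have hsum : ∑ x ∈ A.erase a, vdist (v x) (v (f x)) ^ 2 =
          ∑ x ∈ A.erase a, vdist (v x) (v (f' x)) ^ 2 := by
        apply Finset.sum_congr rfl
        intro x hx
        have hxa : x ≠ a := (Finset.mem_erase.mp hx).1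
        have hxb : x ≠ b := fun h =>
          (Finset.disjoint_left.mp hdisj (Finset.mem_of_mem_erase hx)) (h ▸ hb)
        rw [hfother x hxa hxb]
      rw [hsum]
      linarith [hf'sum]
end GreedyAux

/-- **Lemma 15 (greedy matching under vertex expansion).** For every `c > 0` there is
`C > 0` such that: if `n ≥ 2` is even and `v_1, …, v_n ∈ ℝ^d` satisfy the vertex
expansion condition `|Ball[S;√r]| ≥ (1+c)|S|` for every `S` with `|S| ≤ n/2`, then for
every bisection `(S, S̄)` there is a perfect matching crossing the bisection (encoded
as a fixpoint-free involution `f` exchanging `S` and its complement) whose total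
squared length `Σ_{{x,y}∈M} ‖v_x − v_y‖² = (1/2)·Σ_x ‖v_x − v_{f(x)}‖²` is at most
`C·n·r`. -/
theorem greedy_matching (c : ℝ) (hc : 0 < c) :
    ∃ C : ℝ, 0 < C ∧
      ∀ n d : ℕ, 2 ≤ n → Even n → ∀ (v : Fin n → Fin d → ℝ) (r : ℝ), 0 < r →
        (∀ S : Finset (Fin n), S.card ≤ n / 2 →
          (1 + c) * S.card ≤
            (Nat.card {x : Fin n | ∃ s ∈ S, vdist (v x) (v s) ≤ Real.sqrt r} : ℝ)) →
        ∀ S : Finset (Fin n), S.card = n / 2 →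
          ∃ f : Fin n → Fin n, Function.Involutive f ∧ (∀ x, f x ≠ x) ∧
            (∀ x, x ∈ S ↔ f x ∉ S) ∧
            (∑ x : Fin n, ∑ i : Fin d, (v x i - v (f x) i) ^ 2) ≤ 2 * C * n * r := by
  have hL : 0 < Real.log (1 + c) := Real.log_pos (by linarith)
  set L := Real.log (1 + c) with hLdef
  refine ⟨8 + 256 / L ^ 2, by positivity, ?_⟩
  intro n d hn heven v r hr hyp S hS
  set K := n / 2 with hK
  have hn2 : n = 2 * K := by
    obtain ⟨m, hm⟩ := heven
    omega
  have hScomp : Sᶜ.card = K := by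
    have := Finset.card_compl S
    rw [hS] at this
    simp only [Fintype.card_fin] at this
    omega
  have hK1 : 1 ≤ K := by omega
  obtain ⟨f, hfS, hfSc, hfid, hfinv, hfsum⟩ :=
    match_aux v hc hr hyp K S Sᶜ disjoint_compl_right hS hScomp (by omega)
  have hmem : ∀ x : Fin n, x ∈ S ∨ x ∈ Sᶜ := by
    intro x
    by_cases h : x ∈ S
    · exact Or.inl h
    · exact Or.inr (Finset.mem_compl.mpr h)
  refine ⟨f, hfinv, ?_, ?_, ?_⟩
  · intro x
    rcases hmem x with h | h
    · intro heq
      have := hfS x h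
      rw [heq] at this
      exact Finset.mem_compl.mp this h
    · intro heq
      have := hfSc x h
      rw [heq] at this
      exact Finset.mem_compl.mp h this
  · intro x
    constructor
    · intro hx
      exact Finset.mem_compl.mp (hfS x hx)
    · intro hx
      by_contra hxS
      exact hx (hfSc x (Finset.mem_compl.mpr hxS))
  · -- the sum bound
    have hg : ∀ x : Fin n, ∑ i : Fin d, (v x i - v (f x) i) ^ 2 =
        vdist (v x) (v (f x)) ^ 2 := fun x => (vdist_sq _ _).symm
    have hsplit : ∑ x : Fin n, vdist (v x) (v (f x)) ^ 2 =
        (∑ x ∈ S, vdist (v x) (v (f x)) ^ 2) + ∑ x ∈ Sᶜ, vdist (v x) (v (f x)) ^ 2 :=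
      (Finset.sum_add_sum_compl S _).symm
    have hswap : ∑ x ∈ Sᶜ, vdist (v x) (v (f x)) ^ 2 =
        ∑ x ∈ S, vdist (v x) (v (f x)) ^ 2 := by
      apply Finset.sum_nbij' (i := f) (j := f)
      · intro a ha; exact hfSc a ha
      · intro a ha; exact hfS a ha
      · intro a _; exact hfinv a
      · intro a _; exact hfinv a
      · intro a _
        rw [hfinv a, vdist_comm]
    have hterm : ∀ i ∈ Finset.Icc 1 K,
        (2 * ((steps c K i : ℕ) : ℝ) * Real.sqrt r) ^ 2 =
          4 * r * ((steps c K i : ℕ) : ℝ) ^ 2 := by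
      intro i _
      have : Real.sqrt r ^ 2 = r := Real.sq_sqrt hr.le
      nlinarith [this]
    have hbound : ∑ i ∈ Finset.Icc 1 K, (2 * ((steps c K i : ℕ) : ℝ) * Real.sqrt r) ^ 2 ≤
        4 * r * ((2 + 64 / L ^ 2) * K) := by
      rw [Finset.sum_congr rfl hterm, ← Finset.mul_sum]
      exact mul_le_mul_of_nonneg_left (sum_steps_sq hc K) (by positivity)
    have hKr : (0:ℝ) ≤ (K:ℝ) := by positivity
    have hD : (0:ℝ) ≤ 64 / L ^ 2 := by positivity
    calc ∑ x : Fin n, ∑ i : Fin d, (v x i - v (f x) i) ^ 2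
        = ∑ x : Fin n, vdist (v x) (v (f x)) ^ 2 := Finset.sum_congr rfl (fun x _ => hg x)
      _ = (∑ x ∈ S, vdist (v x) (v (f x)) ^ 2) + ∑ x ∈ Sᶜ, vdist (v x) (v (f x)) ^ 2 := hsplit
      _ = 2 * ∑ x ∈ S, vdist (v x) (v (f x)) ^ 2 := by rw [hswap]; ring
      _ ≤ 2 * (4 * r * ((2 + 64 / L ^ 2) * K)) := by
          have := le_trans hfsum hbound
          linarith
      _ ≤ 2 * (8 + 256 / L ^ 2) * n * r := by
          have hncast : (n : ℝ) = 2 * (K : ℝ) := by exact_mod_cast hn2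
          rw [hncast]
          have h1 : 0 ≤ (K:ℝ) * r := mul_nonneg hKr hr.le
          have h2 : 0 ≤ (K:ℝ) * r / L ^ 2 := by positivity
          have expand1 : 2 * (4 * r * ((2 + 64 / L ^ 2) * (K:ℝ))) =
              16 * ((K:ℝ) * r) + 512 * ((K:ℝ) * r / L ^ 2) := by
            field_simp; ring
          have expand2 : 2 * (8 + 256 / L ^ 2) * (2 * (K:ℝ)) * r =
              32 * ((K:ℝ) * r) + 1024 * ((K:ℝ) * r / L ^ 2) := by
            field_simp; ring
          rw [expand1, expand2]
          linarith
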